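/- arXiv:1208.3266 — 5 statements merged into one kernel-verified Lean document; each statement's English description precedes it below -/
import Mathlib

section
/- Let ω = exp(2πi/3) and for a real number a let M(a) be the 4×4 complex Hermitian matrix with zero diagonal, M(a)₀₁ = M(a)₀₂ = M(a)₀₃ = 1, M(a)₁₂ = M(a)₂₃ = M(a)₃₁ = exp(ia), and remaining entries determined by Hermitian symmetry (M(a)ᵢⱼ = conj(M(a)ⱼᵢ)). Then the vector w = (0, 1, ω, ω̄) ∈ ℂ⁴ satisfies M(a) · w = (ω·exp(ia) + ω̄·exp(−ia)) · w; in particular ω·exp(ia) + ω̄·exp(−ia) = 2·cos(a + 2π/3) is an eigenvalue of M(a). -/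
open Complex Matrix

/-- The Gyroid graph Hamiltonian along the diagonal of the 3-torus. -/
noncomputable def gyroidDiag (a : ℝ) : Matrix (Fin 4) (Fin 4) ℂ :=
  !![0, 1, 1, 1;
     1, 0, Complex.exp (Complex.I * a), Complex.exp (-(Complex.I * a));
     1, Complex.exp (-(Complex.I * a)), 0, Complex.exp (Complex.I * a);
     1, Complex.exp (Complex.I * a), Complex.exp (-(Complex.I * a)), 0]

theorem stmt0 (a : ℝ) :
    let ω : ℂ := Complex.exp (2 * Real.pi * Complex.I / 3)
    let w : Fin 4 → ℂ := ![0, 1, ω, starRingEnd ℂ ω]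
    (gyroidDiag a) *ᵥ w =
      (ω * Complex.exp (Complex.I * a) +
        starRingEnd ℂ ω * Complex.exp (-(Complex.I * a))) • w ∧
    ω * Complex.exp (Complex.I * a) +
        starRingEnd ℂ ω * Complex.exp (-(Complex.I * a)) =
      (2 * Real.cos (a + 2 * Real.pi / 3) : ℝ) := by
  intro ω w
  have hc : starRingEnd ℂ ω = Complex.exp (-(2 * Real.pi * Complex.I / 3)) := by
    rw [show ω = Complex.exp (2 * Real.pi * Complex.I / 3) from rfl,
      ← Complex.exp_conj]
    congr 1
    simp [map_div₀, map_ofNat]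
    ring
  have hmul : ω * starRingEnd ℂ ω = 1 := by
    rw [hc, ← Complex.exp_add]
    simp
  have hsq : ω * ω = starRingEnd ℂ ω := by
    rw [hc, show ω = Complex.exp (2 * Real.pi * Complex.I / 3) from rfl,
      ← Complex.exp_add,
      show (2 * (Real.pi:ℂ) * Complex.I / 3 + 2 * Real.pi * Complex.I / 3)
        = -(2 * Real.pi * Complex.I / 3) + 2 * Real.pi * Complex.I by ring,
      Complex.exp_add, Complex.exp_two_pi_mul_I, mul_one]
  have hsq2 : starRingEnd ℂ ω * starRingEnd ℂ ω = ω := by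
    have := congrArg (starRingEnd ℂ) hsq
    simpa using this
  have hre : ω = Complex.exp (((2 * Real.pi / 3 : ℝ) : ℂ) * Complex.I) := by
    rw [show (((2 * Real.pi / 3 : ℝ) : ℂ) * Complex.I)
      = 2 * Real.pi * Complex.I / 3 by push_cast; try ring]
  have hsum : 1 + ω + starRingEnd ℂ ω = 0 := by
    have h2 : ω + starRingEnd ℂ ω = ((2 * ω.re : ℝ) : ℂ) := by
      rw [Complex.add_conj]
    have h3 : ω.re = Real.cos (2 * Real.pi / 3) := by
      rw [hre, Complex.exp_ofReal_mul_I_re]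
    have h4 : Real.cos (2 * Real.pi / 3) = -(1/2) := by
      rw [show 2 * Real.pi / 3 = Real.pi - Real.pi / 3 by ring,
        Real.cos_pi_sub, Real.cos_pi_div_three]
    rw [add_assoc, h2, h3, h4]
    norm_num
  have he : Complex.exp (Complex.I * a) * Complex.exp (-(Complex.I * a)) = 1 := by
    rw [← Complex.exp_add]; simp
  constructor
  · funext i
    fin_cases i
    · simpa [gyroidDiag, mulVec, dotProduct, Fin.sum_univ_four, w] using hsum
    · simp [gyroidDiag, mulVec, dotProduct, Fin.sum_univ_four, w]
      ring
    · simp [gyroidDiag, mulVec, dotProduct, Fin.sum_univ_four, w]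
      linear_combination (-Complex.exp (Complex.I * a)) * hsq +
        (-Complex.exp (-(Complex.I * a))) * hmul
    · simp [gyroidDiag, mulVec, dotProduct, Fin.sum_univ_four, w]
      linear_combination (-Complex.exp (Complex.I * a)) * hmul +
        (-Complex.exp (-(Complex.I * a))) * hsq2
  · have h1 : ω * Complex.exp (Complex.I * a)
        = Complex.exp (((a + 2 * Real.pi / 3 : ℝ) : ℂ) * Complex.I) := by
      rw [show ω = Complex.exp (2 * Real.pi * Complex.I / 3) from rfl, ← Complex.exp_add]
      congr 1
      push_cast
      ring
    have h2 : starRingEnd ℂ ω * Complex.exp (-(Complex.I * a))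
        = Complex.exp (((-(a + 2 * Real.pi / 3) : ℝ) : ℂ) * Complex.I) := by
      rw [hc, ← Complex.exp_add]
      congr 1
      push_cast
      ring
    rw [h1, h2, Complex.exp_mul_I, Complex.exp_mul_I, ← Complex.ofReal_cos,
      ← Complex.ofReal_sin, ← Complex.ofReal_cos, ← Complex.ofReal_sin,
      Real.cos_neg, Real.sin_neg]
    push_cast
    ring
end

section
/- Let M(a) be the 4×4 Hermitian matrix with zero diagonal, M(a)₀₁ = M(a)₀₂ = M(a)₀₃ = 1, M(a)₁₂ = M(a)₂₃ = M(a)₃₁ = exp(ia), and Hermitian symmetry. Then the characteristic polynomial of M(a) equals (X² − 2·cos(a)·X − 3)·(X² + 2·cos(a)·X + 2·cos(2a) − 1). -/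
set_option maxHeartbeats 1000000

open Complex Matrix Polynomial

lemma det_fin_four' {R : Type*} [CommRing R]
    (a b c d e f g h i j k l m n o p : R) :
    Matrix.det !![a, b, c, d; e, f, g, h; i, j, k, l; m, n, o, p] =
      a*(f*(k*p - l*o) - g*(j*p - l*n) + h*(j*o - k*n))
      - b*(e*(k*p - l*o) - g*(i*p - l*m) + h*(i*o - k*m))
      + c*(e*(j*p - l*n) - f*(i*p - l*m) + h*(i*n - j*m))
      - d*(e*(j*o - k*n) - f*(i*o - k*m) + g*(i*n - j*m)) := by
  rw [Matrix.det_succ_row_zero]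
  simp [Fin.sum_univ_succ, Matrix.det_fin_three, Fin.succAbove,
    Fin.castSucc, Fin.castAdd, Fin.castLE]
  ring

theorem stmt1 (a : ℝ) :
    (gyroidDiag a).charpoly =
      (X ^ 2 - C ((2 * Real.cos a : ℝ) : ℂ) * X - 3) *
      (X ^ 2 + C ((2 * Real.cos a : ℝ) : ℂ) * X + C ((2 * Real.cos (2 * a) - 1 : ℝ) : ℂ)) := by
  set c := Complex.exp (Complex.I * a) with hc
  set c' := Complex.exp (-(Complex.I * a)) with hc'
  have h1 : c * c' = 1 := by rw [hc, hc', ← Complex.exp_add]; simp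
  have hcos : ((2 * Real.cos a : ℝ) : ℂ) = c + c' := by
    push_cast
    rw [Complex.two_cos, hc, hc', mul_comm, neg_mul, mul_comm]
  have hcos2 : ((2 * Real.cos (2 * a) - 1 : ℝ) : ℂ) = c ^ 2 + c' ^ 2 - 1 := by
    push_cast
    have h2 := Complex.two_cos ((2 * a : ℝ) : ℂ)
    push_cast at h2
    rw [show ((2:ℂ) * ↑a * I) = ((2:ℕ):ℂ) * (I * ↑a) by push_cast; ring,
      show (-((2:ℂ) * ↑a) * I) = ((2:ℕ):ℂ) * (-(I * ↑a)) by push_cast; ring,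
      Complex.exp_nat_mul, Complex.exp_nat_mul] at h2
    rw [h2, ← hc, ← hc']
  have hM : charmatrix (gyroidDiag a) =
      !![X, -1, -1, -1;
         -1, X, -C c, -C c';
         -1, -C c', X, -C c;
         -1, -C c, -C c', X] := by
    ext i j
    fin_cases i <;> fin_cases j <;>
      simp [charmatrix_apply, gyroidDiag, Matrix.one_apply, Matrix.vecHead, Matrix.vecTail] <;> rfl
  rw [Matrix.charpoly, hM, hcos, hcos2, det_fin_four']
  simp only [C_add, C_sub, C_pow, C_1]
  have h1' : (C c) * (C c') = 1 := by rw [← C_mul, h1, Polynomial.C_1]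
  linear_combination (X * C c + X * C c' - (X:ℂ[X]) ^ 2 + 3) * h1'
end

section
/- Let M be the 4×4 complex Hermitian matrix with zero diagonal, M₀₁ = M₀₂ = M₀₃ = 1, M₁₂ = M₂₃ = M₃₁ = i, and Hermitian symmetry (so M₂₁ = M₃₂ = M₁₃ = −i). Then M² = 3·I₄. Consequently the eigenvalues of M are ±√3, and since the trace of M is 0, each eigenvalue √3 and −√3 occurs with multiplicity exactly 2. -/
open Matrix Polynomial Complex

theorem stmt4 :
    let M : Matrix (Fin 4) (Fin 4) ℂ :=
      !![0, 1, 1, 1;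
         1, 0, Complex.I, -Complex.I;
         1, -Complex.I, 0, Complex.I;
         1, Complex.I, -Complex.I, 0]
    M * M = (3 : ℂ) • (1 : Matrix (Fin 4) (Fin 4) ℂ) ∧
    M.trace = 0 ∧
    M.charpoly =
      (X - C ((Real.sqrt 3 : ℝ) : ℂ)) ^ 2 * (X + C ((Real.sqrt 3 : ℝ) : ℂ)) ^ 2 := by
  intro M
  have hI : Complex.I * Complex.I = -1 := Complex.I_mul_I
  refine ⟨?_, ?_, ?_⟩
  · ext i j
    fin_cases i <;> fin_cases j <;>
      simp [M, Matrix.mul_apply, Fin.sum_univ_four, Matrix.one_apply, Matrix.vecHead,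
        Matrix.vecTail, hI] <;> ring_nf
  · simp [M, Matrix.trace, Fin.sum_univ_four, Matrix.diag]
  · have hch : charmatrix M =
        !![(X : ℂ[X]), -1, -1, -1;
           -1, X, -C Complex.I, C Complex.I;
           -1, C Complex.I, X, -C Complex.I;
           -1, -C Complex.I, C Complex.I, X] := by
      ext i j
      fin_cases i <;> fin_cases j <;>
        simp [M, charmatrix_apply_eq, charmatrix_apply_ne, Matrix.vecHead, Matrix.vecTail]
    have ha : (C ((Real.sqrt 3 : ℝ) : ℂ) : ℂ[X]) ^ 2 = C 3 := by
      rw [← C_pow]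
      congr 1
      have h2 : ((Real.sqrt 3 : ℝ) : ℂ) ^ 2 = (((Real.sqrt 3) ^ 2 : ℝ) : ℂ) := by push_cast; ring
      rw [h2, Real.sq_sqrt (by norm_num : (0:ℝ) ≤ 3)]
      norm_num
    rw [Matrix.charpoly, hch,
      show ((X - C ((Real.sqrt 3 : ℝ) : ℂ)) ^ 2 * (X + C ((Real.sqrt 3 : ℝ) : ℂ)) ^ 2 : ℂ[X])
        = (X^2 - (C ((Real.sqrt 3 : ℝ) : ℂ))^2)^2 by ring, ha]
    simp [Matrix.det_succ_row_zero, Fin.sum_univ_succ, ← _root_.map_mul, hI,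
      show Fin.succAbove (1:Fin 4) (2:Fin 3) = 3 by decide,
      show Fin.succAbove (2:Fin 4) (2:Fin 3) = 3 by decide,
      show Fin.succAbove (3:Fin 4) (2:Fin 3) = 2 by decide,
      show Fin.castSucc (2:Fin 3) = (2:Fin 4) by decide]
    ring_nf
    simp [← _root_.map_mul, ← _root_.map_pow, hI, Complex.I_sq,
      map_ofNat C (3:ℕ), map_ofNat C (9:ℕ)]
    ring
end

section
/- On the torus T³ = (ℝ/2πℤ)³ define the three maps σ₁(a,b,c) = (−a, −b, a+b+c), σ₂(a,b,c) = (−a, −c, −b), σ₃(a,b,c) = (−b, −a, −c). Then σ₁, σ₂, σ₃ satisfy the Coxeter relations of the symmetric group S₄: σᵢ² = id for i = 1,2,3, (σ₁∘σ₂)³ = id, (σ₂∘σ₃)³ = id, and (σ₁∘σ₃)² = id. Consequently there is a group homomorphism from S₄ to the group of self-bijections of T³ sending the adjacent transpositions (12), (23), (34) to σ₁, σ₂, σ₃ respectively. -/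
/-- The momentum torus `T³ = (ℝ/2πℤ)³` of the Gyroid wire network. -/
abbrev GyroidTorus : Type :=
  AddCircle (2 * Real.pi) × AddCircle (2 * Real.pi) × AddCircle (2 * Real.pi)

/-- Lift of the re-gauging induced by the transposition (12). -/
noncomputable def sigma1 : GyroidTorus → GyroidTorus := fun t => (-t.1, -t.2.1, t.1 + t.2.1 + t.2.2)

/-- Lift of the re-gauging induced by the transposition (23). -/
noncomputable def sigma2 : GyroidTorus → GyroidTorus := fun t => (-t.1, -t.2.2, -t.2.1)

/-- Lift of the re-gauging induced by the transposition (34). -/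
noncomputable def sigma3 : GyroidTorus → GyroidTorus := fun t => (-t.2.1, -t.1, -t.2.2)

open Equiv

noncomputable def Vt (t : GyroidTorus) : Fin 4 → AddCircle (2 * Real.pi) :=
  ![t.1, t.2.1, t.2.2, -t.1 - t.2.1 - t.2.2]

noncomputable def gmap (π : Perm (Fin 4)) (t : GyroidTorus) : GyroidTorus :=
  ((Perm.sign π : ℤ) • Vt t (π⁻¹ 0), (Perm.sign π : ℤ) • Vt t (π⁻¹ 1),
    (Perm.sign π : ℤ) • Vt t (π⁻¹ 2))

lemma Vt_gmap (π : Perm (Fin 4)) (t : GyroidTorus) :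
    Vt (gmap π t) = fun i => (Perm.sign π : ℤ) • Vt t (π⁻¹ i) := by
  have hsum : Vt t (π⁻¹ 0) + Vt t (π⁻¹ 1) + Vt t (π⁻¹ 2) + Vt t (π⁻¹ 3) = 0 := by
    have h := Equiv.sum_comp π⁻¹ (Vt t)
    rw [Fin.sum_univ_four, Fin.sum_univ_four] at h
    rw [h]
    show Vt t 0 + Vt t 1 + Vt t 2 + Vt t 3 = 0
    simp only [Vt, Matrix.cons_val_zero, Matrix.cons_val_one, Matrix.head_cons,
      Matrix.cons_val_two, Matrix.tail_cons, Matrix.cons_val_three]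
    abel
  have h3 : Vt t (π⁻¹ 3) = -(Vt t (π⁻¹ 0) + Vt t (π⁻¹ 1) + Vt t (π⁻¹ 2)) :=
    eq_neg_of_add_eq_zero_right hsum
  funext i
  fin_cases i
  · rfl
  · rfl
  · rfl
  · show -((Perm.sign π : ℤ) • Vt t (π⁻¹ 0)) - (Perm.sign π : ℤ) • Vt t (π⁻¹ 1)
      - (Perm.sign π : ℤ) • Vt t (π⁻¹ 2) = (Perm.sign π : ℤ) • Vt t (π⁻¹ 3)
    rw [h3, smul_neg, smul_add, smul_add]
    abel

lemma gmap_mul (π τ : Perm (Fin 4)) : gmap (π * τ) = gmap π ∘ gmap τ := by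
  funext t
  show gmap (π * τ) t = gmap π (gmap τ t)
  rw [show gmap π (gmap τ t) = ((Perm.sign π : ℤ) • Vt (gmap τ t) (π⁻¹ 0),
      (Perm.sign π : ℤ) • Vt (gmap τ t) (π⁻¹ 1),
      (Perm.sign π : ℤ) • Vt (gmap τ t) (π⁻¹ 2)) from rfl]
  rw [Vt_gmap]
  simp only [gmap, map_mul, mul_inv_rev, Perm.mul_apply, Units.val_mul, mul_smul]

lemma gmap_one : gmap 1 = id := by
  funext t
  simp [gmap, Vt]

noncomputable def gperm (π : Perm (Fin 4)) : Perm GyroidTorus where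
  toFun := gmap π
  invFun := gmap π⁻¹
  left_inv := fun t => by
    have h : gmap π⁻¹ ∘ gmap π = id := by rw [← gmap_mul, inv_mul_cancel, gmap_one]
    exact congrFun h t
  right_inv := fun t => by
    have h : gmap π ∘ gmap π⁻¹ = id := by rw [← gmap_mul, mul_inv_cancel, gmap_one]
    exact congrFun h t

noncomputable def ghom : Perm (Fin 4) →* Perm GyroidTorus where
  toFun := gperm
  map_one' := Equiv.ext fun t => by
    show gmap 1 t = t
    rw [gmap_one]; rfl
  map_mul' π τ := Equiv.ext fun t => by
    show gmap (π * τ) t = gmap π (gmap τ t)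
    rw [gmap_mul]; rfl

def rrev : Perm (Fin 4) := Equiv.swap 0 3 * Equiv.swap 1 2

noncomputable def phi : Perm (Fin 4) →* Perm GyroidTorus :=
  ghom.comp (MulAut.conj rrev).toMonoidHom

lemma phi_coe (π : Perm (Fin 4)) : ⇑(phi π) = gmap (rrev * π * rrev⁻¹) := rfl

lemma phi_s1 : ⇑(phi (Equiv.swap 0 1)) = sigma1 := by
  rw [phi_coe, show rrev * Equiv.swap 0 1 * rrev⁻¹ = Equiv.swap 2 3 from by decide]
  funext t
  obtain ⟨a, b, c⟩ := t
  have hs : (Perm.sign (Equiv.swap (2:Fin 4) 3) : ℤ) = -1 := by decide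
  have h0 : (Equiv.swap (2:Fin 4) 3) 0 = 0 := by decide
  have h1 : (Equiv.swap (2:Fin 4) 3) 1 = 1 := by decide
  have h2 : (Equiv.swap (2:Fin 4) 3) 2 = 3 := by decide
  refine Prod.ext ?_ (Prod.ext ?_ ?_) <;>
    simp [gmap, Vt, sigma1, hs, h0, h1, h2, Equiv.swap_inv] <;> abel

lemma phi_s2 : ⇑(phi (Equiv.swap 1 2)) = sigma2 := by
  rw [phi_coe, show rrev * Equiv.swap 1 2 * rrev⁻¹ = Equiv.swap 1 2 from by decide]
  funext t
  obtain ⟨a, b, c⟩ := t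
  have hs : (Perm.sign (Equiv.swap (1:Fin 4) 2) : ℤ) = -1 := by decide
  have h0 : (Equiv.swap (1:Fin 4) 2) 0 = 0 := by decide
  have h1 : (Equiv.swap (1:Fin 4) 2) 1 = 2 := by decide
  have h2 : (Equiv.swap (1:Fin 4) 2) 2 = 1 := by decide
  refine Prod.ext ?_ (Prod.ext ?_ ?_) <;>
    simp [gmap, Vt, sigma2, hs, h0, h1, h2, Equiv.swap_inv] <;> abel

lemma phi_s3 : ⇑(phi (Equiv.swap 2 3)) = sigma3 := by
  rw [phi_coe, show rrev * Equiv.swap 2 3 * rrev⁻¹ = Equiv.swap 0 1 from by decide]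
  funext t
  obtain ⟨a, b, c⟩ := t
  have hs : (Perm.sign (Equiv.swap (0:Fin 4) 1) : ℤ) = -1 := by decide
  have h0 : (Equiv.swap (0:Fin 4) 1) 0 = 1 := by decide
  have h1 : (Equiv.swap (0:Fin 4) 1) 1 = 0 := by decide
  have h2 : (Equiv.swap (0:Fin 4) 1) 2 = 2 := by decide
  refine Prod.ext ?_ (Prod.ext ?_ ?_) <;>
    simp [gmap, Vt, sigma3, hs, h0, h1, h2, Equiv.swap_inv] <;> abel


theorem stmt10 :
    (sigma1 ∘ sigma1 = id) ∧ (sigma2 ∘ sigma2 = id) ∧ (sigma3 ∘ sigma3 = id) ∧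
    ((sigma1 ∘ sigma2) ∘ (sigma1 ∘ sigma2) ∘ (sigma1 ∘ sigma2) = id) ∧
    ((sigma2 ∘ sigma3) ∘ (sigma2 ∘ sigma3) ∘ (sigma2 ∘ sigma3) = id) ∧
    ((sigma1 ∘ sigma3) ∘ (sigma1 ∘ sigma3) = id) ∧
    ∃ φ : Equiv.Perm (Fin 4) →* Equiv.Perm GyroidTorus,
      ⇑(φ (Equiv.swap 0 1)) = sigma1 ∧
      ⇑(φ (Equiv.swap 1 2)) = sigma2 ∧
      ⇑(φ (Equiv.swap 2 3)) = sigma3 := by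
  have key : ∀ π : Perm (Fin 4), π * π = 1 → (⇑(phi π)) ∘ (⇑(phi π)) = id := by
    intro π h
    have h2 : phi π * phi π = 1 := by rw [← map_mul, h, map_one]
    calc (⇑(phi π)) ∘ (⇑(phi π)) = ⇑(phi π * phi π) := rfl
      _ = id := by rw [h2]; rfl
  have key3 : ∀ π : Perm (Fin 4), π * π * π = 1 →
      (⇑(phi π)) ∘ (⇑(phi π)) ∘ (⇑(phi π)) = id := by
    intro π h
    have h2 : phi π * (phi π * phi π) = 1 := by rw [← map_mul, ← map_mul, ← mul_assoc, h, map_one]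
    calc (⇑(phi π)) ∘ (⇑(phi π)) ∘ (⇑(phi π)) = ⇑(phi π * (phi π * phi π)) := rfl
      _ = id := by rw [h2]; rfl
  refine ⟨?_, ?_, ?_, ?_, ?_, ?_, phi, phi_s1, phi_s2, phi_s3⟩
  · rw [← phi_s1]; exact key _ (by decide)
  · rw [← phi_s2]; exact key _ (by decide)
  · rw [← phi_s3]; exact key _ (by decide)
  · rw [← phi_s1, ← phi_s2, ← Perm.coe_mul, ← map_mul]
    exact key3 _ (by decide)
  · rw [← phi_s2, ← phi_s3, ← Perm.coe_mul, ← map_mul]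
    exact key3 _ (by decide)
  · rw [← phi_s1, ← phi_s3, ← Perm.coe_mul, ← map_mul]
    exact key _ (by decide)
end

section
/- Let a, b, c be complex numbers of modulus 1. Then 1 + a + b + c = 0 if and only if (a = −1 and b = −c) or (b = −1 and a = −c) or (c = −1 and a = −b). -/
theorem stmt13 (a b c : ℂ) (ha : ‖a‖ = 1) (hb : ‖b‖ = 1)
    (hc : ‖c‖ = 1) :
    1 + a + b + c = 0 ↔
      (a = -1 ∧ b = -c) ∨ (b = -1 ∧ a = -c) ∨ (c = -1 ∧ a = -b) := by
  have ha1 : a * (starRingEnd ℂ) a = 1 := by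
    rw [Complex.mul_conj, Complex.normSq_eq_norm_sq, ha]; norm_num
  have hb1 : b * (starRingEnd ℂ) b = 1 := by
    rw [Complex.mul_conj, Complex.normSq_eq_norm_sq, hb]; norm_num
  have hc1 : c * (starRingEnd ℂ) c = 1 := by
    rw [Complex.mul_conj, Complex.normSq_eq_norm_sq, hc]; norm_num
  constructor
  · intro h
    have h2 : 1 + (starRingEnd ℂ) a + (starRingEnd ℂ) b + (starRingEnd ℂ) c = 0 := by
      have := congrArg (starRingEnd ℂ) h
      simpa using this
    have h3 : a * b * c + b * c + a * c + a * b = 0 := by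
      have := congrArg (· * (a * b * c)) h2
      simp only [zero_mul] at this
      calc a * b * c + b * c + a * c + a * b
          = (1 + (starRingEnd ℂ) a + (starRingEnd ℂ) b + (starRingEnd ℂ) c) * (a * b * c) := by
            linear_combination (-(b * c)) * ha1 + (-(a * c)) * hb1 + (-(a * b)) * hc1
        _ = 0 := this
    have key : (1 + a) * ((1 + b) * (1 + c)) = 0 := by linear_combination h + h3
    rcases mul_eq_zero.mp key with h4 | h4
    · left
      have hA : a = -1 := by linear_combination h4
      exact ⟨hA, by linear_combination h - h4⟩
    · rcases mul_eq_zero.mp h4 with h5 | h5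
      · right; left
        have hB : b = -1 := by linear_combination h5
        exact ⟨hB, by linear_combination h - h5⟩
      · right; right
        have hC : c = -1 := by linear_combination h5
        exact ⟨hC, by linear_combination h - h5⟩
  · rintro (⟨h1, h2⟩ | ⟨h1, h2⟩ | ⟨h1, h2⟩) <;> subst h1 <;> rw [h2] <;> ring
end
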